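/- If the underlying precedence on a finite set of function symbols is a total well-quasi-ordering, then the recursive path quasi-ordering ≥_RPQO is thin: for every ground term t, the set of ground terms u with u ≈ t (i.e., u ≥ t and t ≥ u) is finite. -/

import Mathlib

attribute [local instance] Classical.propDecidable

/-- Ground terms over a signature `F` with arity function `ar`. -/
inductive GTerm (F : Type) (ar : F → ℕ) : Type where
  | mk (f : F) (args : Fin (ar f) → GTerm F ar) : GTerm F ar

/-- The weight of a term: `w(f(t₁,…,tₙ)) = w(f) + Σ w(tᵢ)`. -/
def weightOf {F : Type} {ar : F → ℕ} (w : F → ℕ) : GTerm F ar → ℕ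
  | .mk f args => w f + ∑ i : Fin (ar f), weightOf w (args i)

/-- The derived multiset quasi-ordering of a relation `r`: `T ≥ U` iff `U = ∅`,
or some `t ∈ T` and `u ∈ U` are `≈`-equal (in both directions of `r`) and
`T − t ≥ U − u`, or some `t ∈ T` satisfies `T − t ≥ U` minus all elements
strictly below `t`. -/
inductive MulGE {α : Type} (r : α → α → Prop) : Multiset α → Multiset α → Prop where
  | empty (T : Multiset α) : MulGE r T 0
  | cancel {T U : Multiset α} (t u : α) (ht : t ∈ T) (hu : u ∈ U)
      (h1 : r t u) (h2 : r u t) (h : MulGE r (T.erase t) (U.erase u)) : MulGE r T U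
  | dominate {T U : Multiset α} (t : α) (ht : t ∈ T)
      (h : MulGE r (T.erase t) (U.filter (fun u => ¬ (r t u ∧ ¬ r u t)))) : MulGE r T U

/-- Size of a term (number of function symbol occurrences). -/
def tsize {F : Type} {ar : F → ℕ} : GTerm F ar → ℕ
  | .mk f args => 1 + ∑ i : Fin (ar f), tsize (args i)

/-- Strict part of the derived multiset ordering. -/
def MulGT {α : Type} (r : α → α → Prop) (T U : Multiset α) : Prop :=
  MulGE r T U ∧ ¬ MulGE r U T

/-- Strict part of the precedence. -/
def strictF {F : Type} (ge : F → F → Prop) (f g : F) : Prop := ge f g ∧ ¬ ge g f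

/-- Equivalence part of the precedence. -/
def equivF {F : Type} (ge : F → F → Prop) (f g : F) : Prop := ge f g ∧ ge g f

/-- The multiset of arguments of a term. -/
def argsM {F : Type} {ar : F → ℕ} {f : F} (args : Fin (ar f) → GTerm F ar) :
    Multiset (GTerm F ar) := (List.ofFn args : List (GTerm F ar))

/-- Fuelled recursive path quasi-ordering: `f(t₁,…,tₘ) ≥ g(u₁,…,uₙ)` iff
(1) `f >_F g` and `{f(ts)} >_mul {us}`, or (2) `g >_F f` and `{ts} ≥_mul {g(us)}`,
or (3) `f ≈_F g` and `{ts} ≥_mul {us}`.  Since each recursive comparison strictly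
decreases the total size of the compared pair, the fuel `tsize t + tsize u` used
in `RPQO` below makes this the exact recursive path quasi-ordering. -/
def RPQOf {F : Type} {ar : F → ℕ} (ge : F → F → Prop) :
    ℕ → GTerm F ar → GTerm F ar → Prop
  | 0, _, _ => False
  | n + 1, .mk f ts, .mk g us =>
      (strictF ge f g ∧ MulGT (RPQOf ge n) {GTerm.mk f ts} (argsM us)) ∨
      (strictF ge g f ∧ MulGE (RPQOf ge n) (argsM ts) {GTerm.mk g us}) ∨
      (equivF ge f g ∧ MulGE (RPQOf ge n) (argsM ts) (argsM us))

/-- The recursive path quasi-ordering derived from the precedence `ge`. -/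
def RPQO {F : Type} {ar : F → ℕ} (ge : F → F → Prop) (t u : GTerm F ar) : Prop :=
  RPQOf ge (tsize t + tsize u) t u

namespace RPQOaux

section MultisetPart
variable {α : Type} {r r' : α → α → Prop}



theorem mulGE_mono_left {T U T' : Multiset α} (h : MulGE r T U) (hle : T ≤ T') :
    MulGE r T' U := by
  induction h generalizing T' with
  | empty => exact .empty T'
  | cancel t u ht hu h1 h2 h ih =>
      exact .cancel t u (Multiset.mem_of_le hle ht) hu h1 h2 (ih (Multiset.erase_le_erase t hle))
  | dominate t ht h ih =>
      exact .dominate t (Multiset.mem_of_le hle ht) (ih (Multiset.erase_le_erase t hle))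

theorem mulGE_dom {T U : Multiset α} (h : MulGE r T U) :
    ∀ u ∈ U, ∃ t ∈ T, r t u := by
  induction h with
  | empty => intro u hu; exact absurd hu (Multiset.notMem_zero u)
  | cancel t u' ht hu' h1 h2 h ih =>
      intro u hu
      by_cases hc : u = u'
      · exact ⟨t, ht, hc ▸ h1⟩
      · obtain ⟨t', ht', hr⟩ := ih u ((Multiset.mem_erase_of_ne hc).mpr hu)
        exact ⟨t', Multiset.mem_of_le (Multiset.erase_le _ _) ht', hr⟩
  | dominate t ht h ih =>
      intro u hu
      by_cases hc : r t u ∧ ¬ r u t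
      · exact ⟨t, ht, hc.1⟩
      · obtain ⟨t', ht', hr⟩ := ih u (Multiset.mem_filter_of_mem hu hc)
        exact ⟨t', Multiset.mem_of_le (Multiset.erase_le _ _) ht', hr⟩

theorem mulGE_single_right {T : Multiset α} {c : α} (h : MulGE r T {c}) :
    ∃ t ∈ T, r t c :=
  mulGE_dom h c (Multiset.mem_singleton_self c)

theorem mulGE_of_single_right {T : Multiset α} {t c : α} (ht : t ∈ T) (h : r t c) :
    MulGE r T {c} := by
  by_cases hc : r c t
  · refine .cancel t c ht (Multiset.mem_singleton_self c) h hc ?_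
    rw [Multiset.erase_singleton]
    exact .empty _
  · refine .dominate t ht ?_
    have : ({c} : Multiset α).filter (fun u => ¬ (r t u ∧ ¬ r u t)) = 0 := by
      rw [Multiset.filter_eq_nil]
      intro u hu
      rw [Multiset.mem_singleton.mp hu]
      exact fun hn => hn ⟨h, hc⟩
    rw [this]
    exact .empty _

theorem mulGT_single_left_of {a : α} {U : Multiset α}
    (H : ∀ u ∈ U, r a u ∧ ¬ r u a) : MulGT r {a} U := by
  constructor
  · refine .dominate a (Multiset.mem_singleton_self a) ?_
    rw [Multiset.erase_singleton]
    have : U.filter (fun u => ¬ (r a u ∧ ¬ r u a)) = 0 := by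
      rw [Multiset.filter_eq_nil]
      intro u hu
      simp only [not_not]
      exact H u hu
    rw [this]
    exact .empty _
  · intro h
    obtain ⟨u, hu, hua⟩ := mulGE_single_right h
    exact (H u hu).2 hua

theorem mulGT_single_left_elim {a : α} {U : Multiset α}
    (h : MulGT r {a} U) : ∀ u ∈ U, r a u ∧ ¬ r u a := by
  intro u hu
  constructor
  · obtain ⟨t, ht, hr⟩ := mulGE_dom h.1 u hu
    rwa [Multiset.mem_singleton.mp ht] at hr
  · exact fun hr => h.2 (mulGE_of_single_right hu hr)

theorem mulGE_refl {T : Multiset α} (H : ∀ x ∈ T, r x x) : MulGE r T T := by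
  induction T using Multiset.induction with
  | empty => exact .empty _
  | cons a s ih =>
      refine .cancel a a (Multiset.mem_cons_self a s) (Multiset.mem_cons_self a s)
        (H a (Multiset.mem_cons_self a s)) (H a (Multiset.mem_cons_self a s)) ?_
      rw [Multiset.erase_cons_head]
      exact ih (fun x hx => H x (Multiset.mem_cons_of_mem hx))

theorem mulGE_congr {T U : Multiset α}
    (h : MulGE r T U)
    (H : ∀ x ∈ T, ∀ y ∈ U, (r x y ↔ r' x y) ∧ (r y x ↔ r' y x)) :
    MulGE r' T U := by
  induction h with
  | empty => exact .empty _
  | @cancel T U t u ht hu h1 h2 h ih =>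
      refine .cancel t u ht hu ((H t ht u hu).1.mp h1) ((H t ht u hu).2.mp h2)
        (ih fun x hx y hy =>
          H x (Multiset.mem_of_le (Multiset.erase_le _ _) hx)
            y (Multiset.mem_of_le (Multiset.erase_le _ _) hy))
  | @dominate T U t ht h ih =>
      refine .dominate t ht ?_
      have hfil : U.filter (fun u => ¬ (r t u ∧ ¬ r u t))
          = U.filter (fun u => ¬ (r' t u ∧ ¬ r' u t)) := by
        apply Multiset.filter_congr
        intro y hy
        have := H t ht y hy
        constructor <;> intro h' h'' <;> apply h'
        · exact ⟨this.1.mpr h''.1, fun hc => h''.2 (this.2.mp hc)⟩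
        · exact ⟨this.1.mp h''.1, fun hc => h''.2 (this.2.mpr hc)⟩
      rw [← hfil]
      exact ih fun x hx y hy =>
        H x (Multiset.mem_of_le (Multiset.erase_le _ _) hx)
          y (Multiset.mem_of_le (Multiset.filter_le _ _) hy)



/-- helper: pull a matched pair out of a `Multiset.Rel`. -/
theorem rel_erase {s : α → α → Prop} {M N : Multiset α} (h : Multiset.Rel s M N)
    {b : α} (hb : b ∈ N) :
    ∃ a ∈ M, s a b ∧ Multiset.Rel s (M.erase a) (N.erase b) := by
  induction h with
  | zero => exact absurd hb (Multiset.notMem_zero b)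
  | @cons a b' as bs hab h ih =>
      by_cases hbb : b = b'
      · subst hbb
        exact ⟨a, Multiset.mem_cons_self a as, hab, by
          rw [Multiset.erase_cons_head, Multiset.erase_cons_head]; exact h⟩
      · have hb' : b ∈ bs := by
          rcases Multiset.mem_cons.mp hb with h' | h'
          · exact absurd h' hbb
          · exact h'
        obtain ⟨a', ha', hab', hrel'⟩ := ih hb'
        refine ⟨a', Multiset.mem_cons_of_mem ha', hab', ?_⟩
        rw [Multiset.erase_cons_tail_of_mem hb']
        by_cases haa : a' = a
        · subst haa
          rw [Multiset.erase_cons_head]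
          have : as = a' ::ₘ as.erase a' := (Multiset.cons_erase ha').symm
          rw [this]
          exact Multiset.Rel.cons hab hrel'
        · rw [Multiset.erase_cons_tail_of_mem ha']
          exact Multiset.Rel.cons hab hrel'

/-- Closed form of the derived multiset quasi-ordering. -/
def CharGE (r : α → α → Prop) (T U : Multiset α) : Prop :=
  ∃ T1 U1 : Multiset α, T1 ≤ T ∧ U1 ≤ U ∧
    Multiset.Rel (fun a b => r a b ∧ r b a) T1 U1 ∧
    ∀ u ∈ U - U1, ∃ t ∈ T - T1, r t u ∧ ¬ r u t

theorem charGE_of_mulGE {T U : Multiset α} (h : MulGE r T U) : CharGE r T U := by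
  induction h with
  | empty T => exact ⟨0, 0, zero_le, le_refl 0, Multiset.Rel.zero, by simp⟩
  | @cancel T U t u ht hu h1 h2 h ih =>
      obtain ⟨T1, U1, hT1, hU1, hrel, hdom⟩ := ih
      refine ⟨t ::ₘ T1, u ::ₘ U1, ?_, ?_, Multiset.Rel.cons ⟨h1, h2⟩ hrel, ?_⟩
      · calc t ::ₘ T1 ≤ t ::ₘ T.erase t := Multiset.cons_le_cons t hT1
          _ = T := Multiset.cons_erase ht
      · calc u ::ₘ U1 ≤ u ::ₘ U.erase u := Multiset.cons_le_cons u hU1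
          _ = U := Multiset.cons_erase hu
      · intro v hv
        rw [Multiset.sub_cons] at hv
        obtain ⟨t', ht', hs⟩ := hdom v hv
        rw [Multiset.sub_cons]
        exact ⟨t', ht', hs⟩
  | @dominate T U t ht h ih =>
      obtain ⟨T1, U1, hT1, hU1, hrel, hdom⟩ := ih
      refine ⟨T1, U1, hT1.trans (Multiset.erase_le t T), hU1.trans (Multiset.filter_le _ U),
        hrel, ?_⟩
      intro v hv
      have hvU : v ∈ U := Multiset.mem_of_le (Multiset.sub_le_self _ _) hv
      by_cases hc : r t v ∧ ¬ r v t
      · -- dominator is t itself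
        refine ⟨t, ?_, hc⟩
        rw [Multiset.mem_sub]
        have h1 : Multiset.count t T1 ≤ Multiset.count t (T.erase t) :=
          Multiset.le_iff_count.mp hT1 t
        rw [Multiset.count_erase_self] at h1
        have h2 : 0 < Multiset.count t T := Multiset.count_pos.mpr ht
        omega
      · -- v survives the filter
        have hvf : v ∈ U.filter (fun u => ¬ (r t u ∧ ¬ r u t)) - U1 := by
          rw [Multiset.mem_sub] at hv ⊢
          rw [Multiset.count_filter_of_pos (p := fun u => ¬ (r t u ∧ ¬ r u t)) hc]
          exact hv
        obtain ⟨t', ht', hs⟩ := hdom v hvf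
        refine ⟨t', ?_, hs⟩
        rw [Multiset.mem_sub] at ht' ⊢
        have : Multiset.count t' (T.erase t) ≤ Multiset.count t' T :=
          Multiset.le_iff_count.mp (Multiset.erase_le t T) t'
        omega

theorem mulGE_of_charGE {T U : Multiset α} (h : CharGE r T U) : MulGE r T U := by
  induction U using Multiset.strongInductionOn generalizing T with
  | _ U IH =>
  obtain ⟨T1, U1, hT1, hU1, hrel, hdom⟩ := h
  by_cases hU1z : U1 = 0
  · subst hU1z
    have hT1z : T1 = 0 := Multiset.rel_zero_right.mp hrel
    subst hT1z
    rw [Multiset.sub_zero] at hdom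
    by_cases hUz : U = 0
    · subst hUz; exact .empty T
    · obtain ⟨u₀, hu₀⟩ := Multiset.exists_mem_of_ne_zero hUz
      obtain ⟨t₀, ht₀, hs₀⟩ := hdom u₀ hu₀
      rw [Multiset.sub_zero] at ht₀
      refine .dominate t₀ ht₀ ?_
      have hlt : U.filter (fun u => ¬ (r t₀ u ∧ ¬ r u t₀)) < U := by
        refine lt_of_le_of_ne (Multiset.filter_le _ U) ?_
        intro heq
        have hm : u₀ ∈ U.filter (fun u => ¬ (r t₀ u ∧ ¬ r u t₀)) := by rw [heq]; exact hu₀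
        exact (Multiset.of_mem_filter (p := fun u => ¬ (r t₀ u ∧ ¬ r u t₀)) hm) hs₀
      refine IH _ hlt ⟨0, 0, zero_le, zero_le, Multiset.Rel.zero, ?_⟩
      intro v hv
      rw [Multiset.sub_zero] at hv
      have hvU : v ∈ U := Multiset.mem_of_le (Multiset.filter_le _ U) hv
      have hvp : ¬ (r t₀ v ∧ ¬ r v t₀) := Multiset.of_mem_filter (p := fun u => ¬ (r t₀ u ∧ ¬ r u t₀)) hv
      obtain ⟨a, haT, hsa⟩ := hdom v hvU
      rw [Multiset.sub_zero] at haT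
      have hane : a ≠ t₀ := by
        intro he; subst he; exact hvp hsa
      refine ⟨a, ?_, hsa⟩
      rw [Multiset.sub_zero]
      exact (Multiset.mem_erase_of_ne hane).mpr haT
  · obtain ⟨u, hu⟩ := Multiset.exists_mem_of_ne_zero hU1z
    obtain ⟨a, ha, ⟨hau, hua⟩, hrel'⟩ := rel_erase hrel hu
    have haT : a ∈ T := Multiset.mem_of_le hT1 ha
    have huU : u ∈ U := Multiset.mem_of_le hU1 hu
    refine .cancel a u haT huU hau hua ?_
    have hUlt : U.erase u < U := (Multiset.erase_lt).mpr huU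
    refine IH _ hUlt ⟨T1.erase a, U1.erase u, Multiset.erase_le_erase a hT1,
      Multiset.erase_le_erase u hU1, hrel', ?_⟩
    have e1 : U.erase u - U1.erase u = U - U1 := by
      ext v
      rw [Multiset.count_sub, Multiset.count_sub]
      by_cases hvu : v = u
      · subst hvu
        rw [Multiset.count_erase_self, Multiset.count_erase_self]
        have : 0 < Multiset.count v U1 := Multiset.count_pos.mpr hu
        omega
      · rw [Multiset.count_erase_of_ne hvu, Multiset.count_erase_of_ne hvu]
    have e2 : T.erase a - T1.erase a = T - T1 := by
      ext v
      rw [Multiset.count_sub, Multiset.count_sub]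
      by_cases hva : v = a
      · subst hva
        rw [Multiset.count_erase_self, Multiset.count_erase_self]
        have : 0 < Multiset.count v T1 := Multiset.count_pos.mpr ha
        omega
      · rw [Multiset.count_erase_of_ne hva, Multiset.count_erase_of_ne hva]
    rw [e1, e2]
    exact hdom



theorem rel_erase_left {s : α → α → Prop} {M N : Multiset α} (h : Multiset.Rel s M N)
    {a : α} (ha : a ∈ M) :
    ∃ b ∈ N, s a b ∧ Multiset.Rel s (M.erase a) (N.erase b) := by
  have h' : Multiset.Rel (flip s) N M := Multiset.rel_flip.mpr h
  obtain ⟨b, hb, hsb, hrel⟩ := rel_erase h' ha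
  exact ⟨b, hb, hsb, Multiset.rel_flip.mp hrel⟩

theorem mem_of_mem_sub {a : α} {s t : Multiset α} (h : a ∈ s - t) : a ∈ s :=
  Multiset.mem_of_le (Multiset.sub_le_self s t) h

theorem mem_sub_of_notMem {a : α} {s t : Multiset α} (ha : a ∈ s) (hn : a ∉ t) :
    a ∈ s - t := by
  rw [Multiset.mem_sub]
  have h1 : Multiset.count a t = 0 := Multiset.count_eq_zero.mpr hn
  have h2 : 0 < Multiset.count a s := Multiset.count_pos.mpr ha
  omega

theorem le_erase_of_notMem {a : α} {s t : Multiset α} (h : s ≤ t) (hn : a ∉ s) :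
    s ≤ t.erase a := by
  rw [Multiset.le_iff_count]
  intro x
  by_cases hx : x = a
  · subst hx
    rw [Multiset.count_eq_zero.mpr hn]
    exact Nat.zero_le _
  · rw [Multiset.count_erase_of_ne hx]
    exact Multiset.le_iff_count.mp h x

theorem sub_erase_erase {a : α} {T T1 : Multiset α} (ha : a ∈ T1) :
    T.erase a - T1.erase a = T - T1 := by
  ext v
  rw [Multiset.count_sub, Multiset.count_sub]
  by_cases hva : v = a
  · subst hva
    rw [Multiset.count_erase_self, Multiset.count_erase_self]
    have : 0 < Multiset.count v T1 := Multiset.count_pos.mpr ha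
    omega
  · rw [Multiset.count_erase_of_ne hva, Multiset.count_erase_of_ne hva]

theorem mem_sub_mono {a : α} {s t t' : Multiset α} (h : a ∈ s - t) (ht : t' ≤ t) :
    a ∈ s - t' := by
  rw [Multiset.mem_sub] at h ⊢
  have := Multiset.le_iff_count.mp ht a
  omega

/-- maximal element of a nonempty multiset wrt a locally total transitive relation -/
theorem exists_max {M : Multiset α} (hne : M ≠ 0)
    (htot : ∀ x ∈ M, ∀ y ∈ M, r x y ∨ r y x)
    (htr : ∀ x ∈ M, ∀ y ∈ M, ∀ z ∈ M, r x y → r y z → r x z) :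
    ∃ m ∈ M, ∀ x ∈ M, r m x := by
  induction M using Multiset.induction with
  | empty => exact absurd rfl hne
  | cons a s ih =>
      have haM : a ∈ a ::ₘ s := Multiset.mem_cons_self a s
      have hraa : r a a := by rcases htot a haM a haM with h | h <;> exact h
      by_cases hs : s = 0
      · subst hs
        refine ⟨a, haM, ?_⟩
        intro x hx
        rcases Multiset.mem_cons.mp hx with h | h
        · rw [h]; exact hraa
        · exact absurd h (Multiset.notMem_zero x)
      · obtain ⟨m', hm', hmax'⟩ := ih hs
          (fun x hx y hy => htot x (Multiset.mem_cons_of_mem hx) y (Multiset.mem_cons_of_mem hy))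
          (fun x hx y hy z hz => htr x (Multiset.mem_cons_of_mem hx)
            y (Multiset.mem_cons_of_mem hy) z (Multiset.mem_cons_of_mem hz))
        have hm'M : m' ∈ a ::ₘ s := Multiset.mem_cons_of_mem hm'
        by_cases hma : r m' a
        · refine ⟨m', hm'M, ?_⟩
          intro x hx
          rcases Multiset.mem_cons.mp hx with h | h
          · rw [h]; exact hma
          · exact hmax' x h
        · have haa : r a m' := (htot a haM m' hm'M).resolve_right hma
          refine ⟨a, haM, ?_⟩
          intro x hx
          rcases Multiset.mem_cons.mp hx with h | h
          · rw [h]; exact hraa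
          · exact htr a haM m' hm'M x (Multiset.mem_cons_of_mem h) haa (hmax' x h)

/-- CUT: remove a maximal matched pair from a mutual comparison. -/
theorem mulGE_cut {T U : Multiset α} {a₀ b₀ : α}
    (h : MulGE r T U) (ha : a₀ ∈ T) (hb : b₀ ∈ U)
    (hub : ∀ x, (x ∈ T ∨ x ∈ U) → r a₀ x)
    (hba : r b₀ a₀)
    (htr : ∀ x y z, (x ∈ T ∨ x ∈ U) → (y ∈ T ∨ y ∈ U) → (z ∈ T ∨ z ∈ U) →
      r x y → r y z → r x z) :
    MulGE r (T.erase a₀) (U.erase b₀) := by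
  obtain ⟨T1, U1, hT1, hU1, hrel, hdom⟩ := charGE_of_mulGE h
  by_cases hbU1 : b₀ ∈ U1
  · obtain ⟨a', ha', ⟨hab, hba'⟩, hrel'⟩ := rel_erase hrel hbU1
    have ha'T : a' ∈ T := Multiset.mem_of_le hT1 ha'
    by_cases haa : a' = a₀
    · subst haa
      refine mulGE_of_charGE ⟨T1.erase a', U1.erase b₀,
        Multiset.erase_le_erase a' hT1, Multiset.erase_le_erase b₀ hU1, hrel', ?_⟩
      rw [sub_erase_erase ha', sub_erase_erase hbU1]
      exact hdom
    · -- re-pair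
      have ha₀T1 : a₀ ∈ T1 ∨ a₀ ∉ T1 := em _
      have hra'a₀ : r a' a₀ := htr a' b₀ a₀ (Or.inl ha'T) (Or.inr hb) (Or.inl ha) hab hba
      have hra₀a' : r a₀ a' := hub a' (Or.inl ha'T)
      rcases ha₀T1 with haT1 | haT1
      · -- a₀ matched in T1 : re-pair a' with a₀'s partner
        have ha₀e : a₀ ∈ T1.erase a' := (Multiset.mem_erase_of_ne (fun he => haa he.symm)).mpr haT1
        obtain ⟨b', hb', ⟨h1, h2⟩, hrel''⟩ := rel_erase_left hrel' ha₀e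
        have hb'U : b' ∈ U := Multiset.mem_of_le hU1
          (Multiset.mem_of_le (Multiset.erase_le b₀ U1) hb')
        have hab' : r a' b' := htr a' a₀ b' (Or.inl ha'T) (Or.inl ha) (Or.inr hb'U) hra'a₀ h1
        have hb'a : r b' a' := htr b' a₀ a' (Or.inr hb'U) (Or.inl ha) (Or.inl ha'T) h2 hra₀a'
        have ha'e : a' ∈ T1.erase a₀ := (Multiset.mem_erase_of_ne haa).mpr ha'
        have e1 : T1.erase a₀ = a' ::ₘ (T1.erase a').erase a₀ := by
          rw [Multiset.erase_comm]
          exact (Multiset.cons_erase ha'e).symm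
        have e2 : U1.erase b₀ = b' ::ₘ (U1.erase b₀).erase b' := (Multiset.cons_erase hb').symm
        refine mulGE_of_charGE ⟨T1.erase a₀, U1.erase b₀,
          Multiset.erase_le_erase a₀ hT1, Multiset.erase_le_erase b₀ hU1, ?_, ?_⟩
        · rw [e1, e2]
          exact Multiset.Rel.cons ⟨hab', hb'a⟩ hrel''
        · rw [sub_erase_erase haT1, sub_erase_erase hbU1]
          exact hdom
      · -- a₀ not matched: T1 ≤ T.erase a₀
        refine mulGE_of_charGE ⟨T1.erase a', U1.erase b₀,
          (Multiset.erase_le a' T1).trans (le_erase_of_notMem hT1 haT1),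
          Multiset.erase_le_erase b₀ hU1, hrel', ?_⟩
        rw [sub_erase_erase hbU1]
        intro u hu
        obtain ⟨t, ht, hst⟩ := hdom u hu
        have huU : u ∈ U := mem_of_mem_sub hu
        by_cases hta : t = a₀
        · have hst' : r a₀ u ∧ ¬ r u a₀ := hta ▸ hst
          -- replace dominator a₀ by a'
          refine ⟨a', ?_, ?_, ?_⟩
          · rw [Multiset.mem_sub]
            have hne : a' ≠ a₀ := haa
            rw [Multiset.count_erase_of_ne hne]
            have c1 : Multiset.count a' T1 ≤ Multiset.count a' T :=
              Multiset.le_iff_count.mp hT1 a'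
            have c2 : 0 < Multiset.count a' T1 := Multiset.count_pos.mpr ha'
            rw [Multiset.count_erase_self]
            omega
          · exact htr a' a₀ u (Or.inl ha'T) (Or.inl ha) (Or.inr huU) hra'a₀ hst'.1
          · intro hua'
            exact hst'.2 (htr u a' a₀ (Or.inr huU) (Or.inl ha'T) (Or.inl ha) hua' hra'a₀)
        · obtain ⟨t', ht'⟩ : t ∈ T - T1 ∧ True := ⟨ht, trivial⟩
          refine ⟨t, ?_, hst⟩
          rw [Multiset.mem_sub] at ht ⊢
          rw [Multiset.count_erase_of_ne hta]
          have : Multiset.count t (T1.erase a') ≤ Multiset.count t T1 :=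
            Multiset.le_iff_count.mp (Multiset.erase_le a' T1) t
          omega
  · -- b₀ unmatched: impossible, since it would be strictly dominated
    exfalso
    have hbsub : b₀ ∈ U - U1 := mem_sub_of_notMem hb hbU1
    obtain ⟨t, ht, hst⟩ := hdom b₀ hbsub
    have htT : t ∈ T := mem_of_mem_sub ht
    exact hst.2 (htr b₀ a₀ t (Or.inr hb) (Or.inl ha) (Or.inl htT) hba (hub t (Or.inl htT)))



theorem eq_zero_of_mulGE_zero {U : Multiset α} (h : MulGE r 0 U) : U = 0 := by
  cases h with
  | empty => rfl
  | cancel t u ht hu h1 h2 h => exact absurd ht (Multiset.notMem_zero t)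
  | dominate t ht h => exact absurd ht (Multiset.notMem_zero t)

theorem mulGE_total : ∀ (n : ℕ) (A B : Multiset α),
    Multiset.card A + Multiset.card B ≤ n →
    (∀ x, (x ∈ A ∨ x ∈ B) → ∀ y, (y ∈ A ∨ y ∈ B) → r x y ∨ r y x) →
    (∀ x y z, (x ∈ A ∨ x ∈ B) → (y ∈ A ∨ y ∈ B) → (z ∈ A ∨ z ∈ B) →
      r x y → r y z → r x z) →
    MulGE r A B ∨ MulGE r B A := by
  intro n
  induction n with
  | zero =>
      intro A B hcard htot htr
      have hB : B = 0 := Multiset.card_eq_zero.mp (by omega)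
      subst hB
      exact Or.inl (.empty A)
  | succ n IH =>
      intro A B hcard htot htr
      by_cases hB : B = 0
      · subst hB; exact Or.inl (.empty A)
      by_cases hA : A = 0
      · subst hA; exact Or.inr (.empty B)
      have hne : A + B ≠ 0 := by
        intro h
        have : Multiset.card (A + B) = 0 := by rw [h]; rfl
        rw [Multiset.card_add] at this
        exact hA (Multiset.card_eq_zero.mp (by omega))
      have htot' : ∀ x ∈ A + B, ∀ y ∈ A + B, r x y ∨ r y x := fun x hx y hy =>
        htot x (Multiset.mem_add.mp hx) y (Multiset.mem_add.mp hy)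
      have htr' : ∀ x ∈ A + B, ∀ y ∈ A + B, ∀ z ∈ A + B, r x y → r y z → r x z :=
        fun x hx y hy z hz => htr x y z (Multiset.mem_add.mp hx) (Multiset.mem_add.mp hy)
          (Multiset.mem_add.mp hz)
      obtain ⟨m, hm, hmax⟩ := exists_max hne htot' htr'
      have hmax' : ∀ x, (x ∈ A ∨ x ∈ B) → r m x := fun x hx =>
        hmax x (Multiset.mem_add.mpr hx)
      rcases Multiset.mem_add.mp hm with hmA | hmB
      · by_cases hex : ∃ b ∈ B, r b m
        · obtain ⟨b, hbB, hbm⟩ := hex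
          have hmb : r m b := hmax' b (Or.inr hbB)
          have hc1 : Multiset.card (A.erase m) + Multiset.card (B.erase b) ≤ n := by
            rw [Multiset.card_erase_of_mem hmA, Multiset.card_erase_of_mem hbB]
            have h1 : 0 < Multiset.card A := Multiset.card_pos.mpr hA
            have h2 : 0 < Multiset.card B := Multiset.card_pos.mpr hB
            simp only [Nat.pred_eq_sub_one]
            omega
          have hmem : ∀ x, (x ∈ A.erase m ∨ x ∈ B.erase b) → (x ∈ A ∨ x ∈ B) := by
            rintro x (hx | hx)
            · exact Or.inl (Multiset.mem_of_le (Multiset.erase_le _ _) hx)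
            · exact Or.inr (Multiset.mem_of_le (Multiset.erase_le _ _) hx)
          rcases IH (A.erase m) (B.erase b) hc1
              (fun x hx y hy => htot x (hmem x hx) y (hmem y hy))
              (fun x y z hx hy hz => htr x y z (hmem x hx) (hmem y hy) (hmem z hz)) with h | h
          · exact Or.inl (.cancel m b hmA hbB hmb hbm h)
          · exact Or.inr (.cancel b m hbB hmA hbm hmb h)
        · push_neg at hex
          refine Or.inl (.dominate m hmA ?_)
          have : B.filter (fun u => ¬ (r m u ∧ ¬ r u m)) = 0 := by
            rw [Multiset.filter_eq_nil]
            intro u hu hn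
            exact hn ⟨hmax' u (Or.inr hu), hex u hu⟩
          rw [this]
          exact .empty _
      · by_cases hex : ∃ a ∈ A, r a m
        · obtain ⟨b, hbB, hbm⟩ := hex
          have hmb : r m b := hmax' b (Or.inl hbB)
          have hc1 : Multiset.card (A.erase b) + Multiset.card (B.erase m) ≤ n := by
            rw [Multiset.card_erase_of_mem hbB, Multiset.card_erase_of_mem hmB]
            have h1 : 0 < Multiset.card A := Multiset.card_pos.mpr hA
            have h2 : 0 < Multiset.card B := Multiset.card_pos.mpr hB
            simp only [Nat.pred_eq_sub_one]
            omega
          have hmem : ∀ x, (x ∈ A.erase b ∨ x ∈ B.erase m) → (x ∈ A ∨ x ∈ B) := by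
            rintro x (hx | hx)
            · exact Or.inl (Multiset.mem_of_le (Multiset.erase_le _ _) hx)
            · exact Or.inr (Multiset.mem_of_le (Multiset.erase_le _ _) hx)
          rcases IH (A.erase b) (B.erase m) hc1
              (fun x hx y hy => htot x (hmem x hx) y (hmem y hy))
              (fun x y z hx hy hz => htr x y z (hmem x hx) (hmem y hy) (hmem z hz)) with h | h
          · exact Or.inl (.cancel b m hbB hmB hbm hmb h)
          · exact Or.inr (.cancel m b hmB hbB hmb hbm h)
        · push_neg at hex
          refine Or.inr (.dominate m hmB ?_)
          have : A.filter (fun u => ¬ (r m u ∧ ¬ r u m)) = 0 := by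
            rw [Multiset.filter_eq_nil]
            intro u hu hn
            exact hn ⟨hmax' u (Or.inl hu), hex u hu⟩
          rw [this]
          exact .empty _



/-- mutual MulGE yields a perfect matching by equivalent elements -/
theorem mulGE_match : ∀ (n : ℕ) (A B : Multiset α),
    Multiset.card A + Multiset.card B ≤ n →
    MulGE r A B → MulGE r B A →
    (∀ x, (x ∈ A ∨ x ∈ B) → ∀ y, (y ∈ A ∨ y ∈ B) → r x y ∨ r y x) →
    (∀ x y z, (x ∈ A ∨ x ∈ B) → (y ∈ A ∨ y ∈ B) → (z ∈ A ∨ z ∈ B) →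
      r x y → r y z → r x z) →
    Multiset.Rel (fun a b => r a b ∧ r b a) A B := by
  intro n
  induction n with
  | zero =>
      intro A B hcard _ _ _ _
      have hA : A = 0 := Multiset.card_eq_zero.mp (by omega)
      have hB : B = 0 := Multiset.card_eq_zero.mp (by omega)
      subst hA; subst hB
      exact Multiset.Rel.zero
  | succ n IH =>
      intro A B hcard hAB hBA htot htr
      by_cases hA : A = 0
      · subst hA
        have hB : B = 0 := eq_zero_of_mulGE_zero hAB
        subst hB
        exact Multiset.Rel.zero
      have hne : A + B ≠ 0 := by
        intro h
        have : Multiset.card (A + B) = 0 := by rw [h]; rfl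
        rw [Multiset.card_add] at this
        exact hA (Multiset.card_eq_zero.mp (by omega))
      have htot' : ∀ x ∈ A + B, ∀ y ∈ A + B, r x y ∨ r y x := fun x hx y hy =>
        htot x (Multiset.mem_add.mp hx) y (Multiset.mem_add.mp hy)
      have htr' : ∀ x ∈ A + B, ∀ y ∈ A + B, ∀ z ∈ A + B, r x y → r y z → r x z :=
        fun x hx y hy z hz => htr x y z (Multiset.mem_add.mp hx) (Multiset.mem_add.mp hy)
          (Multiset.mem_add.mp hz)
      obtain ⟨m, hm, hmax⟩ := exists_max hne htot' htr'
      have hmax' : ∀ x, (x ∈ A ∨ x ∈ B) → r m x := fun x hx =>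
        hmax x (Multiset.mem_add.mpr hx)
      -- swap memberships helper
      have hswap : ∀ x, (x ∈ B ∨ x ∈ A) → (x ∈ A ∨ x ∈ B) := fun x hx => hx.symm
      rcases Multiset.mem_add.mp hm with hmA | hmB
      · -- m ∈ A; find its partner in B
        obtain ⟨u, huB, hum⟩ := mulGE_dom hBA m hmA
        have hmu : r m u := hmax' u (Or.inr huB)
        have hubB : ∀ x, (x ∈ B ∨ x ∈ A) → r u x := fun x hx =>
          htr u m x (Or.inr huB) (Or.inl hmA) (hswap x hx) hum (hmax' x (hswap x hx))
        have cut1 : MulGE r (A.erase m) (B.erase u) :=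
          mulGE_cut hAB hmA huB hmax' hum htr
        have cut2 : MulGE r (B.erase u) (A.erase m) :=
          mulGE_cut hBA huB hmA hubB hmu
            (fun x y z hx hy hz => htr x y z (hswap x hx) (hswap y hy) (hswap z hz))
        have hmemA : ∀ x, x ∈ A.erase m → x ∈ A := fun x hx =>
          Multiset.mem_of_le (Multiset.erase_le _ _) hx
        have hmemB : ∀ x, x ∈ B.erase u → x ∈ B := fun x hx =>
          Multiset.mem_of_le (Multiset.erase_le _ _) hx
        have hmem : ∀ x, (x ∈ A.erase m ∨ x ∈ B.erase u) → (x ∈ A ∨ x ∈ B) := by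
          rintro x (hx | hx)
          · exact Or.inl (hmemA x hx)
          · exact Or.inr (hmemB x hx)
        have hcard' : Multiset.card (A.erase m) + Multiset.card (B.erase u) ≤ n := by
          rw [Multiset.card_erase_of_mem hmA, Multiset.card_erase_of_mem huB]
          have h1 : 0 < Multiset.card A := Multiset.card_pos.mpr hA
          have h2 : 0 < Multiset.card B := Multiset.card_pos.mpr (fun h => by
            subst h; exact Multiset.notMem_zero u huB)
          simp only [Nat.pred_eq_sub_one]
          omega
        have hrel := IH (A.erase m) (B.erase u) hcard' cut1 cut2
          (fun x hx y hy => htot x (hmem x hx) y (hmem y hy))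
          (fun x y z hx hy hz => htr x y z (hmem x hx) (hmem y hy) (hmem z hz))
        rw [← Multiset.cons_erase hmA, ← Multiset.cons_erase huB]
        exact Multiset.Rel.cons ⟨hmu, hum⟩ hrel
      · -- m ∈ B; find its partner in A
        obtain ⟨u, huA, hum⟩ := mulGE_dom hAB m hmB
        have hmu : r m u := hmax' u (Or.inl huA)
        have hubA : ∀ x, (x ∈ A ∨ x ∈ B) → r u x := fun x hx =>
          htr u m x (Or.inl huA) (Or.inr hmB) hx hum (hmax' x hx)
        have cut1 : MulGE r (A.erase u) (B.erase m) :=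
          mulGE_cut hAB huA hmB hubA hmu htr
        have cut2 : MulGE r (B.erase m) (A.erase u) :=
          mulGE_cut hBA hmB huA (fun x hx => hmax' x (hswap x hx)) hum
            (fun x y z hx hy hz => htr x y z (hswap x hx) (hswap y hy) (hswap z hz))
        have hmem : ∀ x, (x ∈ A.erase u ∨ x ∈ B.erase m) → (x ∈ A ∨ x ∈ B) := by
          rintro x (hx | hx)
          · exact Or.inl (Multiset.mem_of_le (Multiset.erase_le _ _) hx)
          · exact Or.inr (Multiset.mem_of_le (Multiset.erase_le _ _) hx)
        have hcard' : Multiset.card (A.erase u) + Multiset.card (B.erase m) ≤ n := by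
          rw [Multiset.card_erase_of_mem huA, Multiset.card_erase_of_mem hmB]
          have h1 : 0 < Multiset.card A := Multiset.card_pos.mpr hA
          have h2 : 0 < Multiset.card B := Multiset.card_pos.mpr (fun h => by
            subst h; exact Multiset.notMem_zero m hmB)
          simp only [Nat.pred_eq_sub_one]
          omega
        have hrel := IH (A.erase u) (B.erase m) hcard' cut1 cut2
          (fun x hx y hy => htot x (hmem x hx) y (hmem y hy))
          (fun x y z hx hy hz => htr x y z (hmem x hx) (hmem y hy) (hmem z hz))
        rw [← Multiset.cons_erase huA, ← Multiset.cons_erase hmB]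
        exact Multiset.Rel.cons ⟨hum, hmu⟩ hrel




/-- one element from each of the three multisets, in some order -/
def Mem3 (A B C : Multiset α) (x y z : α) : Prop :=
  (x ∈ A ∧ y ∈ B ∧ z ∈ C) ∨ (x ∈ C ∧ y ∈ A ∧ z ∈ B) ∨ (x ∈ B ∧ y ∈ C ∧ z ∈ A) ∨
  (x ∈ A ∧ y ∈ C ∧ z ∈ B) ∨ (x ∈ B ∧ y ∈ A ∧ z ∈ C) ∨ (x ∈ C ∧ y ∈ B ∧ z ∈ A)

theorem mem3_mono {A B C A' B' C' : Multiset α} {x y z : α}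
    (hA : ∀ u : α, u ∈ A' → u ∈ A) (hB : ∀ u : α, u ∈ B' → u ∈ B)
    (hC : ∀ u : α, u ∈ C' → u ∈ C) (h : Mem3 A' B' C' x y z) : Mem3 A B C x y z := by
  rcases h with ⟨h1, h2, h3⟩ | ⟨h1, h2, h3⟩ | ⟨h1, h2, h3⟩ | ⟨h1, h2, h3⟩ |
    ⟨h1, h2, h3⟩ | ⟨h1, h2, h3⟩
  · exact Or.inl ⟨hA _ h1, hB _ h2, hC _ h3⟩
  · exact Or.inr (Or.inl ⟨hC _ h1, hA _ h2, hB _ h3⟩)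
  · exact Or.inr (Or.inr (Or.inl ⟨hB _ h1, hC _ h2, hA _ h3⟩))
  · exact Or.inr (Or.inr (Or.inr (Or.inl ⟨hA _ h1, hC _ h2, hB _ h3⟩)))
  · exact Or.inr (Or.inr (Or.inr (Or.inr (Or.inl ⟨hB _ h1, hA _ h2, hC _ h3⟩))))
  · exact Or.inr (Or.inr (Or.inr (Or.inr (Or.inr ⟨hC _ h1, hB _ h2, hA _ h3⟩))))

theorem mulGE_trans_aux (B2 : Multiset α) :
    ∀ (A B C A1 B1 C2 : Multiset α),
    A1 ≤ A → B1 ≤ B →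
    Multiset.Rel (fun a b => r a b ∧ r b a) A1 B1 →
    (∀ u ∈ B - B1, ∃ t ∈ A - A1, r t u ∧ ¬ r u t) →
    B2 ≤ B → C2 ≤ C →
    Multiset.Rel (fun a b => r a b ∧ r b a) B2 C2 →
    (∀ w ∈ C - C2, ∃ t ∈ B - B2, r t w ∧ ¬ r w t) →
    (∀ x y z, Mem3 A B C x y z → r x y → r y z → r x z) →
    ∃ A' C', A' ≤ A1 ∧ C' ≤ C ∧ Multiset.Rel (fun a b => r a b ∧ r b a) A' C' ∧
      ∀ w ∈ C - C', ∃ t ∈ A - A', r t w ∧ ¬ r w t := by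
  induction B2 using Multiset.strongInductionOn with
  | _ B2 IHB =>
  intro A B C A1 B1 C2 hA1 hB1 rel1 dom1 hB2 hC2 rel2 dom2 htr
  by_cases hB2z : B2 = 0
  · subst hB2z
    have hC2z : C2 = 0 := Multiset.rel_zero_left.mp rel2
    subst hC2z
    refine ⟨0, 0, zero_le, zero_le, Multiset.Rel.zero, ?_⟩
    intro w hw
    rw [Multiset.sub_zero] at hw ⊢
    obtain ⟨b, hb, hsbw⟩ := dom2 w (by rwa [Multiset.sub_zero])
    rw [Multiset.sub_zero] at hb
    have hwC : w ∈ C := hw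
    by_cases hb1 : b ∈ B1
    · obtain ⟨a, ha, ⟨hab, hba⟩, _⟩ := rel_erase rel1 hb1
      have haA : a ∈ A := Multiset.mem_of_le hA1 ha
      refine ⟨a, haA, ?_, ?_⟩
      · exact htr a b w (Or.inl ⟨haA, hb, hwC⟩) hab hsbw.1
      · intro hwa
        exact hsbw.2 (htr w a b (Or.inr (Or.inl ⟨hwC, haA, hb⟩)) hwa hab)
    · have hbs : b ∈ B - B1 := mem_sub_of_notMem hb hb1
      obtain ⟨a, ha, hsab⟩ := dom1 b hbs
      have haA : a ∈ A := mem_of_mem_sub ha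
      refine ⟨a, haA, ?_, ?_⟩
      · exact htr a b w (Or.inl ⟨haA, hb, hwC⟩) hsab.1 hsbw.1
      · intro hwa
        exact hsab.2 (htr b w a (Or.inr (Or.inr (Or.inl ⟨hb, hwC, haA⟩))) hsbw.1 hwa)
  · obtain ⟨b, hbB2⟩ := Multiset.exists_mem_of_ne_zero hB2z
    obtain ⟨c, hcC2, ⟨hbc, hcb⟩, rel2'⟩ := rel_erase_left rel2 hbB2
    have hbB : b ∈ B := Multiset.mem_of_le hB2 hbB2
    have hcC : c ∈ C := Multiset.mem_of_le hC2 hcC2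
    have hlt : B2.erase b < B2 := Multiset.erase_lt.mpr hbB2
    by_cases hb1 : b ∈ B1
    · -- b is matched to some a in A1
      obtain ⟨a, haA1, ⟨hab, hba⟩, rel1'⟩ := rel_erase rel1 hb1
      have haA : a ∈ A := Multiset.mem_of_le hA1 haA1
      have hac : r a c := htr a b c (Or.inl ⟨haA, hbB, hcC⟩) hab hbc
      have hca : r c a := htr c b a
        (Or.inr (Or.inr (Or.inr (Or.inr (Or.inr ⟨hcC, hbB, haA⟩))))) hcb hba
      have hmemA : ∀ u : α, u ∈ A.erase a → u ∈ A := fun u hu =>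
        Multiset.mem_of_le (Multiset.erase_le _ _) hu
      have hmemB : ∀ u : α, u ∈ B.erase b → u ∈ B := fun u hu =>
        Multiset.mem_of_le (Multiset.erase_le _ _) hu
      have hmemC : ∀ u : α, u ∈ C.erase c → u ∈ C := fun u hu =>
        Multiset.mem_of_le (Multiset.erase_le _ _) hu
      obtain ⟨A'', C'', hA''le, hC''le, rel'', dom''⟩ :=
        IHB (B2.erase b) hlt (A.erase a) (B.erase b) (C.erase c)
          (A1.erase a) (B1.erase b) (C2.erase c)
          (Multiset.erase_le_erase a hA1) (Multiset.erase_le_erase b hB1) rel1'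
          (by rw [sub_erase_erase hb1, sub_erase_erase haA1]; exact dom1)
          (Multiset.erase_le_erase b hB2) (Multiset.erase_le_erase c hC2) rel2'
          (by rw [sub_erase_erase hcC2, sub_erase_erase hbB2]; exact dom2)
          (fun x y z hm => htr x y z (mem3_mono hmemA hmemB hmemC hm))
      refine ⟨a ::ₘ A'', c ::ₘ C'', ?_, ?_, Multiset.Rel.cons ⟨hac, hca⟩ rel'', ?_⟩
      · calc a ::ₘ A'' ≤ a ::ₘ A1.erase a := Multiset.cons_le_cons a hA''le
          _ = A1 := Multiset.cons_erase haA1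
      · calc c ::ₘ C'' ≤ c ::ₘ C.erase c := Multiset.cons_le_cons c hC''le
          _ = C := Multiset.cons_erase hcC
      · intro w hw
        rw [Multiset.sub_cons] at hw
        obtain ⟨t, ht, hst⟩ := dom'' w hw
        rw [Multiset.sub_cons]
        exact ⟨t, ht, hst⟩
    · -- b is strictly dominated by some a in A - A1
      have hbs : b ∈ B - B1 := mem_sub_of_notMem hbB hb1
      obtain ⟨a, haS, hsab⟩ := dom1 b hbs
      have haA : a ∈ A := mem_of_mem_sub haS
      have hsac : r a c ∧ ¬ r c a := by
        constructor
        · exact htr a b c (Or.inl ⟨haA, hbB, hcC⟩) hsab.1 hbc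
        · intro hca
          exact hsab.2 (htr b c a (Or.inr (Or.inr (Or.inl ⟨hbB, hcC, haA⟩))) hbc hca)
      have hmemC : ∀ u : α, u ∈ C.erase c → u ∈ C := fun u hu =>
        Multiset.mem_of_le (Multiset.erase_le _ _) hu
      obtain ⟨A'', C'', hA''le, hC''le, rel'', dom''⟩ :=
        IHB (B2.erase b) hlt A B (C.erase c) A1 B1 (C2.erase c)
          hA1 hB1 rel1 dom1
          ((Multiset.erase_le b B2).trans hB2) (Multiset.erase_le_erase c hC2) rel2'
          (by
            rw [sub_erase_erase hcC2]
            intro w hw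
            obtain ⟨t, ht, hst⟩ := dom2 w hw
            exact ⟨t, mem_sub_mono ht (Multiset.erase_le b B2), hst⟩)
          (fun x y z hm => htr x y z (mem3_mono (fun u hu => hu) (fun u hu => hu) hmemC hm))
      refine ⟨A'', C'', hA''le, hC''le.trans (Multiset.erase_le c C), rel'', ?_⟩
      intro w hw
      by_cases hwc : w = c
      · refine ⟨a, mem_sub_mono haS hA''le, ?_⟩
        rw [hwc]
        exact hsac
      · have hw' : w ∈ C.erase c - C'' := by
          rw [Multiset.mem_sub] at hw ⊢
          rw [Multiset.count_erase_of_ne hwc]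
          exact hw
        exact dom'' w hw'


theorem mulGE_trans {A B C : Multiset α} (hAB : MulGE r A B) (hBC : MulGE r B C)
    (htr : ∀ x y z, Mem3 A B C x y z → r x y → r y z → r x z) :
    MulGE r A C := by
  obtain ⟨A1, B1, hA1, hB1, rel1, dom1⟩ := charGE_of_mulGE hAB
  obtain ⟨B2, C2, hB2, hC2, rel2, dom2⟩ := charGE_of_mulGE hBC
  obtain ⟨A', C', hA', hC', rel', dom'⟩ :=
    mulGE_trans_aux B2 A B C A1 B1 C2 hA1 hB1 rel1 dom1 hB2 hC2 rel2 dom2 htr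
  exact mulGE_of_charGE ⟨A', C', hA'.trans hA1, hC', rel', dom'⟩


theorem mulGE_of_forall_strict {T U : Multiset α} {t : α} (ht : t ∈ T)
    (H : ∀ u ∈ U, r t u ∧ ¬ r u t) : MulGE r T U := by
  refine .dominate t ht ?_
  have : U.filter (fun u => ¬ (r t u ∧ ¬ r u t)) = 0 := by
    rw [Multiset.filter_eq_nil]
    intro u hu hn
    exact hn (H u hu)
  rw [this]
  exact .empty _

end MultisetPart

section TermPart
variable {F : Type} {ar : F → ℕ}

theorem tsize_pos (t : GTerm F ar) : 1 ≤ tsize t := by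
  cases t with
  | mk f args => rw [tsize]; omega

theorem mem_argsM_iff {f : F} {args : Fin (ar f) → GTerm F ar} {x : GTerm F ar} :
    x ∈ argsM args ↔ ∃ i, args i = x := by
  rw [argsM]
  constructor
  · intro h
    have := List.mem_ofFn.mp h
    obtain ⟨i, hi⟩ := this
    exact ⟨i, hi⟩
  · rintro ⟨i, rfl⟩
    exact List.mem_ofFn.mpr ⟨i, rfl⟩

theorem args_mem_argsM {f : F} (args : Fin (ar f) → GTerm F ar) (i : Fin (ar f)) :
    args i ∈ argsM args := mem_argsM_iff.mpr ⟨i, rfl⟩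

theorem tsize_args_lt {f : F} (args : Fin (ar f) → GTerm F ar) (i : Fin (ar f)) :
    tsize (args i) < tsize (GTerm.mk f args) := by
  rw [tsize]
  have : tsize (args i) ≤ ∑ j : Fin (ar f), tsize (args j) :=
    Finset.single_le_sum (f := fun j => tsize (args j)) (fun j _ => Nat.zero_le _)
      (Finset.mem_univ i)
  omega

theorem tsize_lt_of_mem_argsM {f : F} {args : Fin (ar f) → GTerm F ar} {x : GTerm F ar}
    (h : x ∈ argsM args) : tsize x < tsize (GTerm.mk f args) := by
  obtain ⟨i, rfl⟩ := mem_argsM_iff.mp h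
  exact tsize_args_lt args i

/-- proper subterm relation -/
inductive Subt : GTerm F ar → GTerm F ar → Prop where
  | arg {f : F} {args : Fin (ar f) → GTerm F ar} (i : Fin (ar f)) :
      Subt (args i) (GTerm.mk f args)
  | deep {f : F} {args : Fin (ar f) → GTerm F ar} {i : Fin (ar f)} {x : GTerm F ar} :
      Subt x (args i) → Subt x (GTerm.mk f args)

theorem subt_tsize {x y : GTerm F ar} (h : Subt x y) : tsize x < tsize y := by
  induction h with
  | arg i => exact tsize_args_lt _ i
  | @deep f args i x hx ih => exact lt_trans ih (tsize_args_lt args i)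

theorem subt_inv {s : GTerm F ar} {f : F} {args : Fin (ar f) → GTerm F ar}
    (h : Subt s (GTerm.mk f args)) : ∃ i, s = args i ∨ Subt s (args i) := by
  cases h with
  | arg i => exact ⟨i, Or.inl rfl⟩
  | deep hx => exact ⟨_, Or.inr hx⟩

theorem subt_of_mem_argsM {f : F} {args : Fin (ar f) → GTerm F ar} {x : GTerm F ar}
    (h : x ∈ argsM args) : Subt x (GTerm.mk f args) := by
  obtain ⟨i, rfl⟩ := mem_argsM_iff.mp h
  exact Subt.arg i

theorem subt_trans {x y z : GTerm F ar} (hxy : Subt x y) (hyz : Subt y z) : Subt x z := by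
  induction hyz with
  | arg i => exact Subt.deep hxy
  | deep h ih => exact Subt.deep (ih hxy)

variable (ge : F → F → Prop)

theorem mulGE_iff_congr {T U : Multiset (GTerm F ar)} {r r' : GTerm F ar → GTerm F ar → Prop}
    (H : ∀ x ∈ T, ∀ y ∈ U, (r x y ↔ r' x y) ∧ (r y x ↔ r' y x)) :
    MulGE r T U ↔ MulGE r' T U :=
  ⟨fun h => mulGE_congr h H,
   fun h => mulGE_congr h (fun x hx y hy => ⟨(H x hx y hy).1.symm, (H x hx y hy).2.symm⟩)⟩

theorem rpqof_stab : ∀ (N : ℕ) (a b : GTerm F ar), tsize a + tsize b ≤ N →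
    (RPQOf ge N a b ↔ RPQO ge a b) := by
  intro N
  induction N using Nat.strong_induction_on with
  | _ N IH =>
  intro a b hab
  cases a with
  | mk f ts =>
  cases b with
  | mk g us =>
  have hsa : 1 ≤ tsize (GTerm.mk f ts) := tsize_pos _
  have hsb : 1 ≤ tsize (GTerm.mk g us) := tsize_pos _
  set A := GTerm.mk f ts with hA
  set B := GTerm.mk g us with hB
  obtain ⟨M, rfl⟩ : ∃ M, N = M + 1 := ⟨N - 1, by omega⟩
  obtain ⟨k, hk⟩ : ∃ k, tsize A + tsize B = k + 1 := ⟨tsize A + tsize B - 1, by omega⟩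
  have hkM : k ≤ M := by omega
  have hkN : k < M + 1 := by omega
  have key : ∀ x y : GTerm F ar, tsize x + tsize y ≤ k →
      (RPQOf ge M x y ↔ RPQOf ge k x y) := by
    intro x y h
    exact (IH M (by omega) x y (by omega)).trans (IH k hkN x y h).symm
  have keyAB : ∀ (T U : Multiset (GTerm F ar)),
      (∀ x ∈ T, ∀ y ∈ U, tsize x + tsize y ≤ k) →
      (MulGE (RPQOf ge M) T U ↔ MulGE (RPQOf ge k) T U) := by
    intro T U hTU
    exact mulGE_iff_congr (fun x hx y hy =>
      ⟨key x y (hTU x hx y hy), key y x (by have := hTU x hx y hy; omega)⟩)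
  show RPQOf ge (M + 1) A B ↔ RPQOf ge (tsize A + tsize B) A B
  rw [hk]
  show ((strictF ge f g ∧ MulGT (RPQOf ge M) {A} (argsM us)) ∨
      (strictF ge g f ∧ MulGE (RPQOf ge M) (argsM ts) {B}) ∨
      (equivF ge f g ∧ MulGE (RPQOf ge M) (argsM ts) (argsM us))) ↔
    ((strictF ge f g ∧ MulGT (RPQOf ge k) {A} (argsM us)) ∨
      (strictF ge g f ∧ MulGE (RPQOf ge k) (argsM ts) {B}) ∨
      (equivF ge f g ∧ MulGE (RPQOf ge k) (argsM ts) (argsM us)))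
  have bnd1 : ∀ x ∈ ({A} : Multiset (GTerm F ar)), ∀ y ∈ argsM us,
      tsize x + tsize y ≤ k := by
    intro x hx y hy
    rw [Multiset.mem_singleton.mp hx]
    have := tsize_lt_of_mem_argsM (f := g) hy
    rw [← hB] at this
    omega
  have bnd2 : ∀ x ∈ argsM ts, ∀ y ∈ ({B} : Multiset (GTerm F ar)),
      tsize x + tsize y ≤ k := by
    intro x hx y hy
    rw [Multiset.mem_singleton.mp hy]
    have := tsize_lt_of_mem_argsM (f := f) hx
    rw [← hA] at this
    omega
  have bnd3 : ∀ x ∈ argsM ts, ∀ y ∈ argsM us, tsize x + tsize y ≤ k := by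
    intro x hx y hy
    have h1 := tsize_lt_of_mem_argsM (f := f) hx
    have h2 := tsize_lt_of_mem_argsM (f := g) hy
    rw [← hA] at h1
    rw [← hB] at h2
    omega
  have bnd1' : ∀ x ∈ argsM us, ∀ y ∈ ({A} : Multiset (GTerm F ar)),
      tsize x + tsize y ≤ k := fun x hx y hy => by
    have := bnd1 y hy x hx; omega
  refine or_congr (and_congr Iff.rfl ?_) (or_congr (and_congr Iff.rfl ?_)
    (and_congr Iff.rfl ?_))
  · exact and_congr (keyAB _ _ bnd1) (not_congr (keyAB _ _ bnd1'))
  · exact keyAB _ _ bnd2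
  · exact keyAB _ _ bnd3

theorem rpqo_unfold (f : F) (ts : Fin (ar f) → GTerm F ar) (g : F)
    (us : Fin (ar g) → GTerm F ar) :
    RPQO ge (GTerm.mk f ts) (GTerm.mk g us) ↔
      ((strictF ge f g ∧ MulGT (RPQO ge) {GTerm.mk f ts} (argsM us)) ∨
       (strictF ge g f ∧ MulGE (RPQO ge) (argsM ts) {GTerm.mk g us}) ∨
       (equivF ge f g ∧ MulGE (RPQO ge) (argsM ts) (argsM us))) := by
  set A := GTerm.mk f ts with hA
  set B := GTerm.mk g us with hB
  have hsa : 1 ≤ tsize A := tsize_pos _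
  have hsb : 1 ≤ tsize B := tsize_pos _
  obtain ⟨k, hk⟩ : ∃ k, tsize A + tsize B = k + 1 := ⟨tsize A + tsize B - 1, by omega⟩
  have key : ∀ (T U : Multiset (GTerm F ar)),
      (∀ x ∈ T, ∀ y ∈ U, tsize x + tsize y ≤ k) →
      (MulGE (RPQOf ge k) T U ↔ MulGE (RPQO ge) T U) := by
    intro T U hTU
    exact mulGE_iff_congr (fun x hx y hy =>
      ⟨rpqof_stab ge k x y (hTU x hx y hy),
       rpqof_stab ge k y x (by have := hTU x hx y hy; omega)⟩)
  have hstart : RPQO ge A B ↔ RPQOf ge (k + 1) A B := by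
    rw [RPQO, hk]
  rw [hstart]
  show ((strictF ge f g ∧ MulGT (RPQOf ge k) {A} (argsM us)) ∨
      (strictF ge g f ∧ MulGE (RPQOf ge k) (argsM ts) {B}) ∨
      (equivF ge f g ∧ MulGE (RPQOf ge k) (argsM ts) (argsM us))) ↔ _
  have bnd1 : ∀ x ∈ ({A} : Multiset (GTerm F ar)), ∀ y ∈ argsM us,
      tsize x + tsize y ≤ k := by
    intro x hx y hy
    rw [Multiset.mem_singleton.mp hx]
    have := tsize_lt_of_mem_argsM (f := g) hy
    rw [← hB] at this
    omega
  have bnd2 : ∀ x ∈ argsM ts, ∀ y ∈ ({B} : Multiset (GTerm F ar)),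
      tsize x + tsize y ≤ k := by
    intro x hx y hy
    rw [Multiset.mem_singleton.mp hy]
    have := tsize_lt_of_mem_argsM (f := f) hx
    rw [← hA] at this
    omega
  have bnd3 : ∀ x ∈ argsM ts, ∀ y ∈ argsM us, tsize x + tsize y ≤ k := by
    intro x hx y hy
    have h1 := tsize_lt_of_mem_argsM (f := f) hx
    have h2 := tsize_lt_of_mem_argsM (f := g) hy
    rw [← hA] at h1
    rw [← hB] at h2
    omega
  have bnd1' : ∀ x ∈ argsM us, ∀ y ∈ ({A} : Multiset (GTerm F ar)),
      tsize x + tsize y ≤ k := fun x hx y hy => by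
    have := bnd1 y hy x hx; omega
  refine or_congr (and_congr Iff.rfl ?_) (or_congr (and_congr Iff.rfl ?_)
    (and_congr Iff.rfl ?_))
  · exact and_congr (key _ _ bnd1) (not_congr (key _ _ bnd1'))
  · exact key _ _ bnd2
  · exact key _ _ bnd3

theorem rpqo_refl (hrefl : ∀ f, ge f f) : ∀ t : GTerm F ar, RPQO ge t t := by
  intro t
  induction t with
  | mk f ts IH =>
      rw [rpqo_unfold]
      refine Or.inr (Or.inr ⟨⟨hrefl f, hrefl f⟩, mulGE_refl ?_⟩)
      intro x hx
      obtain ⟨i, rfl⟩ := mem_argsM_iff.mp hx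
      exact IH i

end TermPart

section Mega
variable {F : Type} {ar : F → ℕ} {ge : F → F → Prop}

theorem prec_tri (htotal : ∀ f g, ge f g ∨ ge g f) (f g : F) :
    strictF ge f g ∨ strictF ge g f ∨ equivF ge f g := by
  rcases htotal f g with h | h
  · by_cases h2 : ge g f
    · exact Or.inr (Or.inr ⟨h, h2⟩)
    · exact Or.inl ⟨h, h2⟩
  · by_cases h2 : ge f g
    · exact Or.inr (Or.inr ⟨h2, h⟩)
    · exact Or.inr (Or.inl ⟨h, h2⟩)

theorem mega (htotal : ∀ f g, ge f g ∨ ge g f) : ∀ N : ℕ,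
    (∀ x y : GTerm F ar, tsize x + tsize y ≤ N → ∀ s, Subt s y →
      RPQO ge x y → RPQO ge x s) ∧
    (∀ a w : GTerm F ar, tsize a + tsize w ≤ N → ∀ s, Subt s a →
      RPQO ge s w → RPQO ge a w) ∧
    (∀ s x : GTerm F ar, tsize s + tsize x ≤ N → ∀ v, Subt v s →
      RPQO ge v x → ¬ RPQO ge x s) ∧
    (∀ s x : GTerm F ar, tsize s + tsize x ≤ N → ∀ v, Subt v s →
      RPQO ge v x → RPQO ge s x) := by
  intro N
  induction N using Nat.strong_induction_on with
  | _ N IH =>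
  have IHA := fun (M : ℕ) (h : M < N) => (IH M h).1
  have IHB := fun (M : ℕ) (h : M < N) => (IH M h).2.1
  have IHC := fun (M : ℕ) (h : M < N) => (IH M h).2.2.1
  have IHD := fun (M : ℕ) (h : M < N) => (IH M h).2.2.2
  clear IH
  have hA : ∀ x y : GTerm F ar, tsize x + tsize y ≤ N → ∀ s, Subt s y →
      RPQO ge x y → RPQO ge x s := by
    intro x y hxy s hs hgexy
    obtain ⟨p, xs⟩ := x
    obtain ⟨q, ys⟩ := y
    rw [rpqo_unfold] at hgexy
    obtain ⟨i, hi⟩ := subt_inv hs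
    have hyiM : ys i ∈ argsM ys := args_mem_argsM ys i
    have hyis : tsize (ys i) < tsize (GTerm.mk q ys) := tsize_args_lt ys i
    have hss : tsize s < tsize (GTerm.mk q ys) := subt_tsize hs
    rcases hgexy with ⟨hpq, hmulgt⟩ | ⟨hqp, hmul⟩ | ⟨heq, hmul⟩
    · have hel := mulGT_single_left_elim hmulgt
      have hxyi : RPQO ge (GTerm.mk p xs) (ys i) := (hel (ys i) hyiM).1
      rcases hi with hi | hi
      · rw [hi]; exact hxyi
      · exact IHA (tsize (GTerm.mk p xs) + tsize (ys i)) (by omega) _ _ le_rfl s hi hxyi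
    · obtain ⟨t, htm, hty⟩ := mulGE_single_right hmul
      have htx : tsize t < tsize (GTerm.mk p xs) := tsize_lt_of_mem_argsM htm
      have hts : RPQO ge t s :=
        IHA (tsize t + tsize (GTerm.mk q ys)) (by omega) _ _ le_rfl s hs hty
      exact IHB (tsize (GTerm.mk p xs) + tsize s) (by omega) _ _ le_rfl t
        (subt_of_mem_argsM htm) hts
    · obtain ⟨t, htm, htyi⟩ := mulGE_dom hmul (ys i) hyiM
      have htx : tsize t < tsize (GTerm.mk p xs) := tsize_lt_of_mem_argsM htm
      have hts : RPQO ge t s := by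
        rcases hi with hi | hi
        · rw [hi]; exact htyi
        · exact IHA (tsize t + tsize (ys i)) (by omega) _ _ le_rfl s hi htyi
      exact IHB (tsize (GTerm.mk p xs) + tsize s) (by omega) _ _ le_rfl t
        (subt_of_mem_argsM htm) hts
  have hB : ∀ a w : GTerm F ar, tsize a + tsize w ≤ N → ∀ s, Subt s a →
      RPQO ge s w → RPQO ge a w := by
    intro a w haw
    suffices H : ∀ ns (s : GTerm F ar), tsize s ≤ ns → Subt s a →
        RPQO ge s w → RPQO ge a w by
      intro s hs hg
      exact H (tsize s) s le_rfl hs hg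
    intro ns
    induction ns with
    | zero =>
        intro s hs _ _
        have := tsize_pos s
        omega
    | succ ns IHs =>
        intro s hsle hsub hsw0
        obtain ⟨f, as⟩ := a
        obtain ⟨k, ws⟩ := w
        obtain ⟨m, ss⟩ := s
        obtain ⟨i, hi⟩ := subt_inv hsub
        have hais : tsize (as i) < tsize (GTerm.mk f as) := tsize_args_lt as i
        have hssw : tsize (GTerm.mk m ss) < tsize (GTerm.mk f as) := subt_tsize hsub
        have hsw := hsw0
        rw [rpqo_unfold] at hsw
        rcases hsw with ⟨hmk, hgt⟩ | ⟨hkm, hmul⟩ | ⟨heqmk, hmul⟩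
        · -- s dominates all arguments of w
          have hel := mulGT_single_left_elim hgt
          have haiw : ∀ x ∈ argsM ws, RPQO ge (as i) x ∧ ¬ RPQO ge x (as i) := by
            intro x hx
            have hsx := hel x hx
            have hxw : tsize x < tsize (GTerm.mk k ws) := tsize_lt_of_mem_argsM hx
            rcases hi with hi | hi
            · rw [← hi]; exact hsx
            · constructor
              · exact IHB (tsize (as i) + tsize x) (by omega) _ _ le_rfl _ hi hsx.1
              · exact IHC (tsize (as i) + tsize x) (by omega) _ _ le_rfl _ hi hsx.1
          rcases prec_tri htotal f k with hfk | hkf | hffk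
          · rw [rpqo_unfold]
            refine Or.inl ⟨hfk, mulGT_single_left_of ?_⟩
            intro x hx
            have hsx := hel x hx
            have hxw : tsize x < tsize (GTerm.mk k ws) := tsize_lt_of_mem_argsM hx
            constructor
            · exact IHB (tsize (GTerm.mk f as) + tsize x) (by omega) _ _ le_rfl _ hsub hsx.1
            · exact IHC (tsize (GTerm.mk f as) + tsize x) (by omega) _ _ le_rfl _ hsub hsx.1
          · rw [rpqo_unfold]
            refine Or.inr (Or.inl ⟨hkf, mulGE_of_single_right (args_mem_argsM as i) ?_⟩)
            rcases hi with hi | hi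
            · rw [← hi]; exact hsw0
            · exact IHB (tsize (as i) + tsize (GTerm.mk k ws)) (by omega) _ _ le_rfl _ hi hsw0
          · rw [rpqo_unfold]
            exact Or.inr (Or.inr ⟨hffk, mulGE_of_forall_strict (args_mem_argsM as i) haiw⟩)
        · -- some argument of s is ≥ w : go deeper
          obtain ⟨s', hs'm, hs'w⟩ := mulGE_single_right hmul
          have hs's : tsize s' < tsize (GTerm.mk m ss) := tsize_lt_of_mem_argsM hs'm
          exact IHs s' (by omega) (subt_trans (subt_of_mem_argsM hs'm) hsub) hs'w
        · -- equiv heads, args of s mul-dominate args of w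
          have haiw : ∀ x ∈ argsM ws, RPQO ge (as i) x ∧ ¬ RPQO ge x (as i) := by
            intro x hx
            obtain ⟨v, hvm, hvx⟩ := mulGE_dom hmul x hx
            have hxw : tsize x < tsize (GTerm.mk k ws) := tsize_lt_of_mem_argsM hx
            have hvai : Subt v (as i) := by
              rcases hi with hi | hi
              · rw [← hi]; exact subt_of_mem_argsM hvm
              · exact subt_trans (subt_of_mem_argsM hvm) hi
            constructor
            · exact IHD (tsize (as i) + tsize x) (by omega) _ _ le_rfl v hvai hvx
            · exact IHC (tsize (as i) + tsize x) (by omega) _ _ le_rfl v hvai hvx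
          rcases prec_tri htotal f k with hfk | hkf | hffk
          · rw [rpqo_unfold]
            refine Or.inl ⟨hfk, mulGT_single_left_of ?_⟩
            intro x hx
            obtain ⟨v, hvm, hvx⟩ := mulGE_dom hmul x hx
            have hxw : tsize x < tsize (GTerm.mk k ws) := tsize_lt_of_mem_argsM hx
            have hva : Subt v (GTerm.mk f as) := subt_trans (subt_of_mem_argsM hvm) hsub
            constructor
            · exact IHD (tsize (GTerm.mk f as) + tsize x) (by omega) _ _ le_rfl v hva hvx
            · exact IHC (tsize (GTerm.mk f as) + tsize x) (by omega) _ _ le_rfl v hva hvx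
          · rw [rpqo_unfold]
            refine Or.inr (Or.inl ⟨hkf, mulGE_of_single_right (args_mem_argsM as i) ?_⟩)
            rcases hi with hi | hi
            · rw [← hi]; exact hsw0
            · exact IHB (tsize (as i) + tsize (GTerm.mk k ws)) (by omega) _ _ le_rfl _ hi hsw0
          · rw [rpqo_unfold]
            exact Or.inr (Or.inr ⟨hffk, mulGE_of_forall_strict (args_mem_argsM as i) haiw⟩)
  have hC : ∀ s x : GTerm F ar, tsize s + tsize x ≤ N → ∀ v, Subt v s →
      RPQO ge v x → ¬ RPQO ge x s := by
    intro s x hsx v hvsub hvx hxs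
    obtain ⟨m, ss⟩ := s
    obtain ⟨p, xs⟩ := x
    rw [rpqo_unfold] at hxs
    obtain ⟨i, hi⟩ := subt_inv hvsub
    have hzis : tsize (ss i) < tsize (GTerm.mk m ss) := tsize_args_lt ss i
    have hvs : tsize v < tsize (GTerm.mk m ss) := subt_tsize hvsub
    rcases hxs with ⟨hpm, hgt⟩ | ⟨hmp, hmul⟩ | ⟨heq, hmul⟩
    · have hel := mulGT_single_left_elim hgt
      have h0 := hel (ss i) (args_mem_argsM ss i)
      rcases hi with hi | hi
      · apply h0.2
        rw [← hi]
        exact hvx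
      · exact IHC (tsize (ss i) + tsize (GTerm.mk p xs)) (by omega) _ _ le_rfl v hi hvx h0.1
    · obtain ⟨t, htm, hts⟩ := mulGE_single_right hmul
      have htx : tsize t < tsize (GTerm.mk p xs) := tsize_lt_of_mem_argsM htm
      have htv : RPQO ge t v :=
        IHA (tsize t + tsize (GTerm.mk m ss)) (by omega) _ _ le_rfl v hvsub hts
      exact IHC (tsize (GTerm.mk p xs) + tsize v) (by omega) _ _ le_rfl t
        (subt_of_mem_argsM htm) htv hvx
    · obtain ⟨t, htm, htzi⟩ := mulGE_dom hmul (ss i) (args_mem_argsM ss i)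
      have htx : tsize t < tsize (GTerm.mk p xs) := tsize_lt_of_mem_argsM htm
      have htv : RPQO ge t v := by
        rcases hi with hi | hi
        · rw [hi]; exact htzi
        · exact IHA (tsize t + tsize (ss i)) (by omega) _ _ le_rfl v hi htzi
      exact IHC (tsize (GTerm.mk p xs) + tsize v) (by omega) _ _ le_rfl t
        (subt_of_mem_argsM htm) htv hvx
  have hD : ∀ s x : GTerm F ar, tsize s + tsize x ≤ N → ∀ v, Subt v s →
      RPQO ge v x → RPQO ge s x := by
    intro s x hsx v hvsub hvx
    obtain ⟨m, ss⟩ := s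
    obtain ⟨i, hi⟩ := subt_inv hvsub
    have hzis : tsize (ss i) < tsize (GTerm.mk m ss) := tsize_args_lt ss i
    have hzx : RPQO ge (ss i) x := by
      rcases hi with hi | hi
      · rw [← hi]; exact hvx
      · exact IHD (tsize (ss i) + tsize x) (by omega) _ _ le_rfl v hi hvx
    exact hB (GTerm.mk m ss) x hsx (ss i) (Subt.arg i) hzx
  exact ⟨hA, hB, hC, hD⟩

theorem rpqo_lift (htotal : ∀ f g, ge f g ∨ ge g f) {a w s : GTerm F ar}
    (hs : Subt s a) (h : RPQO ge s w) : RPQO ge a w :=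
  (mega htotal (tsize a + tsize w)).2.1 a w le_rfl s hs h

theorem rpqo_rsub (htotal : ∀ f g, ge f g ∨ ge g f) {x y s : GTerm F ar}
    (hs : Subt s y) (h : RPQO ge x y) : RPQO ge x s :=
  (mega htotal (tsize x + tsize y)).1 x y le_rfl s hs h

theorem rpqo_nsub (htotal : ∀ f g, ge f g ∨ ge g f) {s x v : GTerm F ar}
    (hv : Subt v s) (h : RPQO ge v x) : ¬ RPQO ge x s :=
  (mega htotal (tsize s + tsize x)).2.2.1 s x le_rfl v hv h

theorem rpqo_sts (htotal : ∀ f g, ge f g ∨ ge g f) {s x v : GTerm F ar}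
    (hv : Subt v s) (h : RPQO ge v x) : RPQO ge s x :=
  (mega htotal (tsize s + tsize x)).2.2.2 s x le_rfl v hv h

theorem rpqo_ssp (hrefl : ∀ f, ge f f) (htotal : ∀ f g, ge f g ∨ ge g f)
    {s v : GTerm F ar} (hv : Subt v s) :
    RPQO ge s v ∧ ¬ RPQO ge v s :=
  ⟨rpqo_sts htotal hv (rpqo_refl ge hrefl v), rpqo_nsub htotal hv (rpqo_refl ge hrefl v)⟩

end Mega

section Trans
variable {F : Type} {ar : F → ℕ} {ge : F → F → Prop}

theorem sf_trans (htrans : ∀ f g h, ge f g → ge g h → ge f h) {f g h : F}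
    (h1 : strictF ge f g) (h2 : strictF ge g h) : strictF ge f h :=
  ⟨htrans _ _ _ h1.1 h2.1, fun hh => h2.2 (htrans _ _ _ hh h1.1)⟩

theorem sf_eq (htrans : ∀ f g h, ge f g → ge g h → ge f h) {f g h : F}
    (h1 : strictF ge f g) (h2 : equivF ge g h) : strictF ge f h :=
  ⟨htrans _ _ _ h1.1 h2.1, fun hh => h1.2 (htrans _ _ _ h2.1 hh)⟩

theorem eq_sf (htrans : ∀ f g h, ge f g → ge g h → ge f h) {f g h : F}
    (h1 : equivF ge f g) (h2 : strictF ge g h) : strictF ge f h :=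
  ⟨htrans _ _ _ h1.1 h2.1, fun hh => h2.2 (htrans _ _ _ hh h1.1)⟩

theorem eqF_trans (htrans : ∀ f g h, ge f g → ge g h → ge f h) {f g h : F}
    (h1 : equivF ge f g) (h2 : equivF ge g h) : equivF ge f h :=
  ⟨htrans _ _ _ h1.1 h2.1, htrans _ _ _ h2.2 h1.2⟩

theorem eqF_symm {f g : F} (h : equivF ge f g) : equivF ge g f := ⟨h.2, h.1⟩

theorem rpqo_trans_aux (htotal : ∀ f g, ge f g ∨ ge g f)
    (htrans : ∀ f g h, ge f g → ge g h → ge f h) :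
    ∀ N (a b c : GTerm F ar), tsize a + tsize b + tsize c ≤ N →
      RPQO ge a b → RPQO ge b c → RPQO ge a c := by
  intro N
  induction N using Nat.strong_induction_on with
  | _ N IH =>
  intro a b c habc hab0 hbc0
  obtain ⟨f, as⟩ := a
  obtain ⟨g, bs⟩ := b
  obtain ⟨k, cs⟩ := c
  have hab := hab0
  have hbc := hbc0
  rw [rpqo_unfold] at hab hbc
  rcases hab with ⟨hfg, hgt1⟩ | ⟨hgf, hm1⟩ | ⟨heq1, hm1⟩
  · -- case A1
    have hel1 := mulGT_single_left_elim hgt1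
    rcases hbc with ⟨hgk, hgt2⟩ | ⟨hkg, hm2⟩ | ⟨heq2, hm2⟩
    · have hel2 := mulGT_single_left_elim hgt2
      rw [rpqo_unfold]
      refine Or.inl ⟨sf_trans htrans hfg hgk, mulGT_single_left_of ?_⟩
      intro w hw
      have hww : tsize w < tsize (GTerm.mk k cs) := tsize_lt_of_mem_argsM hw
      constructor
      · exact IH (tsize (GTerm.mk f as) + tsize (GTerm.mk g bs) + tsize w) (by omega)
          _ _ _ le_rfl hab0 (hel2 w hw).1
      · intro hwA
        exact (hel2 w hw).2 (IH (tsize w + tsize (GTerm.mk f as) + tsize (GTerm.mk g bs))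
          (by omega) _ _ _ le_rfl hwA hab0)
    · obtain ⟨t, htb, htc⟩ := mulGE_single_right hm2
      have htt : tsize t < tsize (GTerm.mk g bs) := tsize_lt_of_mem_argsM htb
      exact IH (tsize (GTerm.mk f as) + tsize t + tsize (GTerm.mk k cs)) (by omega)
        _ _ _ le_rfl (hel1 t htb).1 htc
    · rw [rpqo_unfold]
      refine Or.inl ⟨sf_eq htrans hfg heq2, mulGT_single_left_of ?_⟩
      intro w hw
      have hww : tsize w < tsize (GTerm.mk k cs) := tsize_lt_of_mem_argsM hw
      obtain ⟨t, htb, htw⟩ := mulGE_dom hm2 w hw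
      have htt : tsize t < tsize (GTerm.mk g bs) := tsize_lt_of_mem_argsM htb
      constructor
      · exact IH (tsize (GTerm.mk f as) + tsize t + tsize w) (by omega)
          _ _ _ le_rfl (hel1 t htb).1 htw
      · intro hwA
        exact (hel1 t htb).2 (IH (tsize t + tsize w + tsize (GTerm.mk f as)) (by omega)
          _ _ _ le_rfl htw hwA)
  · -- case A2
    obtain ⟨s, hsa, hsb⟩ := mulGE_single_right hm1
    have hss : tsize s < tsize (GTerm.mk f as) := tsize_lt_of_mem_argsM hsa
    rcases hbc with ⟨hgk, hgt2⟩ | ⟨hkg, hm2⟩ | ⟨heq2, hm2⟩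
    · have hel2 := mulGT_single_left_elim hgt2
      have hsw : ∀ w ∈ argsM cs, RPQO ge s w ∧ ¬ RPQO ge w s := by
        intro w hw
        have hww : tsize w < tsize (GTerm.mk k cs) := tsize_lt_of_mem_argsM hw
        constructor
        · exact IH (tsize s + tsize (GTerm.mk g bs) + tsize w) (by omega)
            _ _ _ le_rfl hsb (hel2 w hw).1
        · intro hws
          exact (hel2 w hw).2 (IH (tsize w + tsize s + tsize (GTerm.mk g bs)) (by omega)
            _ _ _ le_rfl hws hsb)
      rcases prec_tri htotal f k with hfk | hkf | hffk
      · rw [rpqo_unfold]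
        refine Or.inl ⟨hfk, mulGT_single_left_of ?_⟩
        intro w hw
        exact ⟨rpqo_lift htotal (subt_of_mem_argsM hsa) (hsw w hw).1,
          rpqo_nsub htotal (subt_of_mem_argsM hsa) (hsw w hw).1⟩
      · rw [rpqo_unfold]
        refine Or.inr (Or.inl ⟨hkf, mulGE_of_single_right hsa ?_⟩)
        exact IH (tsize s + tsize (GTerm.mk g bs) + tsize (GTerm.mk k cs)) (by omega)
          _ _ _ le_rfl hsb hbc0
      · rw [rpqo_unfold]
        exact Or.inr (Or.inr ⟨hffk, mulGE_of_forall_strict hsa hsw⟩)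
    · have hsc := IH (tsize s + tsize (GTerm.mk g bs) + tsize (GTerm.mk k cs)) (by omega)
        _ _ _ le_rfl hsb hbc0
      rw [rpqo_unfold]
      exact Or.inr (Or.inl ⟨sf_trans htrans hkg hgf, mulGE_of_single_right hsa hsc⟩)
    · have hsc := IH (tsize s + tsize (GTerm.mk g bs) + tsize (GTerm.mk k cs)) (by omega)
        _ _ _ le_rfl hsb hbc0
      rw [rpqo_unfold]
      exact Or.inr (Or.inl ⟨eq_sf htrans (eqF_symm heq2) hgf, mulGE_of_single_right hsa hsc⟩)
  · -- case A3
    rcases hbc with ⟨hgk, hgt2⟩ | ⟨hkg, hm2⟩ | ⟨heq2, hm2⟩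
    · have hel2 := mulGT_single_left_elim hgt2
      rw [rpqo_unfold]
      refine Or.inl ⟨eq_sf htrans heq1 hgk, mulGT_single_left_of ?_⟩
      intro w hw
      have hww : tsize w < tsize (GTerm.mk k cs) := tsize_lt_of_mem_argsM hw
      constructor
      · exact IH (tsize (GTerm.mk f as) + tsize (GTerm.mk g bs) + tsize w) (by omega)
          _ _ _ le_rfl hab0 (hel2 w hw).1
      · intro hwA
        exact (hel2 w hw).2 (IH (tsize w + tsize (GTerm.mk f as) + tsize (GTerm.mk g bs))
          (by omega) _ _ _ le_rfl hwA hab0)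
    · obtain ⟨t, htb, htc⟩ := mulGE_single_right hm2
      have htt : tsize t < tsize (GTerm.mk g bs) := tsize_lt_of_mem_argsM htb
      obtain ⟨s, hsa, hst⟩ := mulGE_dom hm1 t htb
      have hss : tsize s < tsize (GTerm.mk f as) := tsize_lt_of_mem_argsM hsa
      have hsc := IH (tsize s + tsize t + tsize (GTerm.mk k cs)) (by omega)
        _ _ _ le_rfl hst htc
      rw [rpqo_unfold]
      exact Or.inr (Or.inl ⟨sf_eq htrans hkg (eqF_symm heq1), mulGE_of_single_right hsa hsc⟩)
    · rw [rpqo_unfold]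
      refine Or.inr (Or.inr ⟨eqF_trans htrans heq1 heq2, mulGE_trans hm1 hm2 ?_⟩)
      intro x y z hm hxy hyz
      have hb : tsize x + tsize y + tsize z <
          tsize (GTerm.mk f as) + tsize (GTerm.mk g bs) + tsize (GTerm.mk k cs) := by
        rcases hm with ⟨h1, h2, h3⟩ | ⟨h1, h2, h3⟩ | ⟨h1, h2, h3⟩ | ⟨h1, h2, h3⟩ |
          ⟨h1, h2, h3⟩ | ⟨h1, h2, h3⟩ <;>
        · have b1 := tsize_lt_of_mem_argsM h1
          have b2 := tsize_lt_of_mem_argsM h2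
          have b3 := tsize_lt_of_mem_argsM h3
          omega
      exact IH (tsize x + tsize y + tsize z) (by omega) _ _ _ le_rfl hxy hyz

theorem rpqo_trans (htotal : ∀ f g, ge f g ∨ ge g f)
    (htrans : ∀ f g h, ge f g → ge g h → ge f h) {a b c : GTerm F ar}
    (h1 : RPQO ge a b) (h2 : RPQO ge b c) : RPQO ge a c :=
  rpqo_trans_aux htotal htrans (tsize a + tsize b + tsize c) a b c le_rfl h1 h2

end Trans

section Total
variable {F : Type} {ar : F → ℕ} {ge : F → F → Prop}

theorem pair_le_sum {α : Type} (f : α → ℕ) {S : Multiset α} {x y : α}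
    (hx : x ∈ S) (hy : y ∈ S) (hne : x ≠ y) : f x + f y ≤ (S.map f).sum := by
  have hyx : y ∈ S.erase x := (Multiset.mem_erase_of_ne (fun h => hne h.symm)).mpr hy
  have h1 : (S.map f).sum = f x + ((S.erase x).map f).sum := by
    conv_lhs => rw [← Multiset.cons_erase hx]
    rw [Multiset.map_cons, Multiset.sum_cons]
  have h2 : f y ≤ ((S.erase x).map f).sum :=
    Multiset.single_le_sum (fun n _ => Nat.zero_le n) _ (Multiset.mem_map_of_mem f hyx)
  omega

theorem argsM_map_tsize_sum {f : F} (as : Fin (ar f) → GTerm F ar) :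
    ((argsM as).map tsize).sum + 1 = tsize (GTerm.mk f as) := by
  rw [tsize, argsM]
  have : ((List.ofFn as : Multiset (GTerm F ar)).map tsize).sum
      = (List.map tsize (List.ofFn as)).sum := by
    simp
  rw [this, List.map_ofFn, List.sum_ofFn]
  simp [Function.comp]
  omega

theorem rpqo_total_aux (hrefl : ∀ f, ge f f) (htotal : ∀ f g, ge f g ∨ ge g f)
    (htrans : ∀ f g h, ge f g → ge g h → ge f h) :
    ∀ N (a b : GTerm F ar), tsize a + tsize b ≤ N →
      RPQO ge a b ∨ RPQO ge b a := by
  intro N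
  induction N using Nat.strong_induction_on with
  | _ N IH =>
  intro a b hab
  obtain ⟨f, as⟩ := a
  obtain ⟨g, bs⟩ := b
  have hsum1 := argsM_map_tsize_sum as
  have hsum2 := argsM_map_tsize_sum bs
  rcases prec_tri htotal f g with hfg | hgf | heq
  · by_cases hall : ∀ u ∈ argsM bs, RPQO ge (GTerm.mk f as) u ∧ ¬ RPQO ge u (GTerm.mk f as)
    · left
      rw [rpqo_unfold]
      exact Or.inl ⟨hfg, mulGT_single_left_of hall⟩
    · push_neg at hall
      obtain ⟨u, hu, hnu⟩ := hall
      have huu : tsize u < tsize (GTerm.mk g bs) := tsize_lt_of_mem_argsM hu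
      have hua : RPQO ge u (GTerm.mk f as) := by
        rcases IH (tsize u + tsize (GTerm.mk f as)) (by omega) u (GTerm.mk f as)
            le_rfl with h | h
        · exact h
        · exact hnu h
      right
      rw [rpqo_unfold]
      exact Or.inr (Or.inl ⟨hfg, mulGE_of_single_right hu hua⟩)
  · by_cases hall : ∀ u ∈ argsM as, RPQO ge (GTerm.mk g bs) u ∧ ¬ RPQO ge u (GTerm.mk g bs)
    · right
      rw [rpqo_unfold]
      exact Or.inl ⟨hgf, mulGT_single_left_of hall⟩
    · push_neg at hall
      obtain ⟨u, hu, hnu⟩ := hall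
      have huu : tsize u < tsize (GTerm.mk f as) := tsize_lt_of_mem_argsM hu
      have hua : RPQO ge u (GTerm.mk g bs) := by
        rcases IH (tsize u + tsize (GTerm.mk g bs)) (by omega) u (GTerm.mk g bs)
            le_rfl with h | h
        · exact h
        · exact hnu h
      left
      rw [rpqo_unfold]
      exact Or.inr (Or.inl ⟨hgf, mulGE_of_single_right hu hua⟩)
  · -- equiv heads: compare argument multisets
    have htot' : ∀ x, (x ∈ argsM as ∨ x ∈ argsM bs) → ∀ y, (y ∈ argsM as ∨ y ∈ argsM bs) →
        RPQO ge x y ∨ RPQO ge y x := by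
      intro x hx y hy
      by_cases hxy : x = y
      · subst hxy
        exact Or.inl (rpqo_refl ge hrefl x)
      have hbnd : tsize x + tsize y < N := by
        rcases hx with hx | hx <;> rcases hy with hy | hy
        · have := pair_le_sum tsize hx hy hxy
          omega
        · have h1 := tsize_lt_of_mem_argsM hx
          have h2 := tsize_lt_of_mem_argsM hy
          omega
        · have h1 := tsize_lt_of_mem_argsM hx
          have h2 := tsize_lt_of_mem_argsM hy
          omega
        · have := pair_le_sum tsize hx hy hxy
          omega
      exact IH (tsize x + tsize y) hbnd x y le_rfl
    have htr' : ∀ x y z, (x ∈ argsM as ∨ x ∈ argsM bs) → (y ∈ argsM as ∨ y ∈ argsM bs) →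
        (z ∈ argsM as ∨ z ∈ argsM bs) → RPQO ge x y → RPQO ge y z → RPQO ge x z :=
      fun x y z _ _ _ h1 h2 => rpqo_trans htotal htrans h1 h2
    rcases mulGE_total (Multiset.card (argsM as) + Multiset.card (argsM bs))
        (argsM as) (argsM bs) le_rfl htot' htr' with h | h
    · left
      rw [rpqo_unfold]
      exact Or.inr (Or.inr ⟨heq, h⟩)
    · right
      rw [rpqo_unfold]
      exact Or.inr (Or.inr ⟨eqF_symm heq, h⟩)

theorem rpqo_total (hrefl : ∀ f, ge f f) (htotal : ∀ f g, ge f g ∨ ge g f)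
    (htrans : ∀ f g h, ge f g → ge g h → ge f h) (a b : GTerm F ar) :
    RPQO ge a b ∨ RPQO ge b a :=
  rpqo_total_aux hrefl htotal htrans (tsize a + tsize b) a b le_rfl

end Total

section Main
variable {F : Type} {ar : F → ℕ} {ge : F → F → Prop}

theorem eq_case {f g : F} {as : Fin (ar f) → GTerm F ar} {bs : Fin (ar g) → GTerm F ar}
    (hab : RPQO ge (GTerm.mk f as) (GTerm.mk g bs))
    (hba : RPQO ge (GTerm.mk g bs) (GTerm.mk f as)) :
    equivF ge f g ∧ MulGE (RPQO ge) (argsM as) (argsM bs) ∧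
      MulGE (RPQO ge) (argsM bs) (argsM as) := by
  rw [rpqo_unfold] at hab hba
  rcases hab with ⟨hfg, hgt⟩ | ⟨hgf, hm⟩ | ⟨heq, hm⟩ <;>
    rcases hba with ⟨h2, hgt2⟩ | ⟨h2, hm2⟩ | ⟨h2, hm2⟩
  · exact absurd h2.1 hfg.2
  · exact absurd hm2 hgt.2
  · exact absurd h2.1 hfg.2
  · exact absurd hm hgt2.2
  · exact absurd h2.1 hgf.2
  · exact absurd h2.2 hgf.2
  · exact absurd heq.1 h2.2
  · exact absurd heq.2 h2.2
  · exact ⟨heq, hm, hm2⟩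

theorem rel_mem_left' {α : Type} {s : α → α → Prop} {M N : Multiset α}
    (h : Multiset.Rel s M N) {a : α} (ha : a ∈ M) : ∃ b ∈ N, s a b := by
  obtain ⟨b, hb, hs, _⟩ := rel_erase_left h ha
  exact ⟨b, hb, hs⟩

theorem main_finite [Fintype F] (hrefl : ∀ f, ge f f)
    (htrans : ∀ f g h, ge f g → ge g h → ge f h)
    (htotal : ∀ f g, ge f g ∨ ge g f) :
    ∀ t : GTerm F ar, {u : GTerm F ar | RPQO ge u t ∧ RPQO ge t u}.Finite := by
  intro t
  induction t with
  | mk f ts IHt =>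
  set K : Set (GTerm F ar) :=
    ⋃ i : Fin (ar f), {x | RPQO ge x (ts i) ∧ RPQO ge (ts i) x} with hKdef
  have hK : K.Finite := Set.finite_iUnion IHt
  haveI : Finite ↥K := hK.to_subtype
  have hsub : {u : GTerm F ar | RPQO ge u (GTerm.mk f ts) ∧ RPQO ge (GTerm.mk f ts) u}
      ⊆ Set.range (fun p : (Σ gg : F, Fin (ar gg) → ↥K) =>
          GTerm.mk p.1 (fun i => (p.2 i).1)) := by
    intro u hu
    obtain ⟨hut, htu⟩ := hu
    obtain ⟨g, us⟩ := u
    obtain ⟨heq, hm1, hm2⟩ := eq_case hut htu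
    have hrel := mulGE_match (Multiset.card (argsM us) + Multiset.card (argsM ts))
      (argsM us) (argsM ts) le_rfl hm1 hm2
      (fun x _ y _ => rpqo_total hrefl htotal htrans x y)
      (fun x y z _ _ _ h1 h2 => rpqo_trans htotal htrans h1 h2)
    have hargs : ∀ i : Fin (ar g), us i ∈ K := by
      intro i
      obtain ⟨y, hy, hr⟩ := rel_mem_left' hrel (args_mem_argsM us i)
      obtain ⟨j, hj⟩ := mem_argsM_iff.mp hy
      subst hj
      exact Set.mem_iUnion.mpr ⟨j, hr.1, hr.2⟩
    exact ⟨⟨g, fun i => ⟨us i, hargs i⟩⟩, rfl⟩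
  exact (Set.finite_range _).subset hsub

end Main

end RPQOaux

/-- If the precedence on a finite set of function symbols is a total
well-quasi-ordering, then the derived recursive path quasi-ordering is thin:
every equivalence class of ground terms is finite. -/
theorem stmt_10 {F : Type} [Fintype F] (ar : F → ℕ) (ge : F → F → Prop)
    (hrefl : ∀ f, ge f f) (htrans : ∀ f g h, ge f g → ge g h → ge f h)
    (htotal : ∀ f g, ge f g ∨ ge g f)
    (hwqo : ∀ s : ℕ → F, ∃ i j : ℕ, i < j ∧ ge (s j) (s i))
    (t : GTerm F ar) :
    {u : GTerm F ar | RPQO ge u t ∧ RPQO ge t u}.Finite :=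
  RPQOaux.main_finite hrefl htrans htotal t
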